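/- Let $\mathfrak{h}$ be the free non-commutative $\mathbb{Q}$-algebra on letters $z_1, z_2, \dots$, and define the harmonic product $\ast$ recursively by $1 \ast x = x \ast 1 = x$ and $(au) \ast (bv) = a(u \ast bv) + b(au \ast v) + (a \diamond b)(u \ast v)$, where $z_i \diamond z_j = z_{i+j}$. Define the interpolated product $\stackrel{t}{\ast}$ (with a central parameter $t$) by $1 \stackrel{t}{\ast} x = x \stackrel{t}{\ast} 1 = x$ and $(au) \stackrel{t}{\ast} (bv) = a(u \stackrel{t}{\ast} bv) + b(au \stackrel{t}{\ast} v) + (1-2t)(a \diamond b)(u \stackrel{t}{\ast} v) + (t^2 - t)\,(a \diamond b) \diamond (u \stackrel{t}{\ast} v)$ (where the last $\diamond$ contracts $a \diamond b$ into the first letter of each word of $u \stackrel{t}{\ast} v$, and is $0$ on the empty word). Let $S^t$ be the linear operator with $S^t(1)=1$, $S^t(au) = a S^t(u) + t\, a \diamond S^t(u)$. Then $S^t(x \stackrel{t}{\ast} y) = S^t(x) \ast S^t(y)$ for all $x, y \in \mathfrak{h}$. -/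

import Mathlib

open Polynomial

/- Words are lists over ℕ, the entry `a` encoding the letter `z_a`.
Coefficients are in `ℚ[t] = Polynomial ℚ`, with the interpolation parameter
`t = X` a central scalar. -/

/-- Prepend a letter to every word of a combination. -/
noncomputable def pre (a : ℕ) (x : List ℕ →₀ Polynomial ℚ) :
    List ℕ →₀ Polynomial ℚ :=
  Finsupp.mapDomain (a :: ·) x

/-- Contraction of a letter into the first letter of a word (`0` on the empty word). -/
noncomputable def diaWord (a : ℕ) : List ℕ → (List ℕ →₀ Polynomial ℚ)
  | [] => 0
  | b :: w => Finsupp.single ((a + b) :: w) 1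

/-- Linear extension of the contraction. -/
noncomputable def diaComb (a : ℕ) (x : List ℕ →₀ Polynomial ℚ) :
    List ℕ →₀ Polynomial ℚ :=
  x.sum fun w c => c • diaWord a w

/-- The harmonic (stuffle) product `∗` on words:
`(au) ∗ (bv) = a(u ∗ bv) + b(au ∗ v) + (a⋄b)(u ∗ v)`. -/
noncomputable def hstar : List ℕ → List ℕ → (List ℕ →₀ Polynomial ℚ)
  | [], y => Finsupp.single y 1
  | x, [] => Finsupp.single x 1
  | a :: u, b :: v =>
      pre a (hstar u (b :: v)) + pre b (hstar (a :: u) v)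
        + pre (a + b) (hstar u v)
  termination_by x y => x.length + y.length
  decreasing_by all_goals simp <;> omega

/-- The interpolated product `∗_t`:
`(au) ∗_t (bv) = a(u ∗_t bv) + b(au ∗_t v) + (1-2t)(a⋄b)(u ∗_t v)
  + (t²-t)(a⋄b) ⋄ (u ∗_t v)`. -/
noncomputable def tstar : List ℕ → List ℕ → (List ℕ →₀ Polynomial ℚ)
  | [], y => Finsupp.single y 1
  | x, [] => Finsupp.single x 1
  | a :: u, b :: v =>
      pre a (tstar u (b :: v)) + pre b (tstar (a :: u) v)
        + ((1 - 2 * X : Polynomial ℚ) • pre (a + b) (tstar u v))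
        + ((X ^ 2 - X : Polynomial ℚ) • diaComb (a + b) (tstar u v))
  termination_by x y => x.length + y.length
  decreasing_by all_goals simp <;> omega

/-- The operator `S^t` on words: `S^t(au) = a S^t(u) + t (a ⋄ S^t(u))`. -/
noncomputable def St : List ℕ → (List ℕ →₀ Polynomial ℚ)
  | [] => Finsupp.single [] 1
  | a :: u => pre a (St u) + ((X : Polynomial ℚ) • diaComb a (St u))

/-- Linear extension of `S^t`. -/
noncomputable def StL (x : List ℕ →₀ Polynomial ℚ) : List ℕ →₀ Polynomial ℚ :=
  x.sum fun w c => c • St w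

/-- Bilinear extension of the harmonic product. -/
noncomputable def hstarB (x y : List ℕ →₀ Polynomial ℚ) :
    List ℕ →₀ Polynomial ℚ :=
  x.sum fun u c => y.sum fun v d => (c * d) • hstar u v

/-- Bilinear extension of the interpolated product. -/
noncomputable def tstarB (x y : List ℕ →₀ Polynomial ℚ) :
    List ℕ →₀ Polynomial ℚ :=
  x.sum fun u c => y.sum fun v d => (c * d) • tstar u v

abbrev M := List ℕ →₀ Polynomial ℚ

-- pre lemmas
lemma pre_single (a : ℕ) (w : List ℕ) (c : Polynomial ℚ) :
    pre a (Finsupp.single w c) = Finsupp.single (a :: w) c :=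
  Finsupp.mapDomain_single

lemma pre_zero (a : ℕ) : pre a 0 = 0 := Finsupp.mapDomain_zero

lemma pre_add (a : ℕ) (x y : M) : pre a (x + y) = pre a x + pre a y :=
  Finsupp.mapDomain_add

lemma pre_smul (a : ℕ) (c : Polynomial ℚ) (x : M) : pre a (c • x) = c • pre a x :=
  Finsupp.mapDomain_smul c x

-- diaComb via linearCombination
lemma diaComb_eq (a : ℕ) (x : M) :
    diaComb a x = Finsupp.linearCombination (Polynomial ℚ) (diaWord a) x := by
  rw [Finsupp.linearCombination_apply]; rfl

lemma diaComb_single (a : ℕ) (w : List ℕ) (c : Polynomial ℚ) :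
    diaComb a (Finsupp.single w c) = c • diaWord a w := by
  simp [diaComb_eq]

lemma diaComb_zero (a : ℕ) : diaComb a 0 = 0 := by simp [diaComb_eq]

lemma diaComb_add (a : ℕ) (x y : M) :
    diaComb a (x + y) = diaComb a x + diaComb a y := by simp [diaComb_eq]

lemma diaComb_smul (a : ℕ) (c : Polynomial ℚ) (x : M) :
    diaComb a (c • x) = c • diaComb a x := by simp [diaComb_eq]

lemma dia_pre (a b : ℕ) (x : M) : diaComb a (pre b x) = pre (a + b) x := by
  induction x using Finsupp.induction_linear with
  | zero => simp [pre_zero, diaComb_zero]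
  | add f g hf hg => simp [pre_add, diaComb_add, hf, hg]
  | single w c => simp [pre_single, diaComb_single, diaWord, Nat.add_assoc]

lemma dia_dia (a b : ℕ) (x : M) : diaComb a (diaComb b x) = diaComb (a + b) x := by
  induction x using Finsupp.induction_linear with
  | zero => simp [diaComb_zero]
  | add f g hf hg => simp [diaComb_add, hf, hg]
  | single w c =>
    cases w with
    | nil => simp [diaComb_single, diaWord, diaComb_smul, diaComb_zero]
    | cons d w' => simp [diaComb_single, diaWord, diaComb_smul, Nat.add_assoc]

-- hstarB bilinearity
lemma hstarB_single_single (u v : List ℕ) (c d : Polynomial ℚ) :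
    hstarB (Finsupp.single u c) (Finsupp.single v d) = (c * d) • hstar u v := by
  unfold hstarB
  rw [Finsupp.sum_single_index (by simp), Finsupp.sum_single_index (by simp)]

lemma hstarB_eq (x y : M) :
    hstarB x y =
      Finsupp.linearCombination (Polynomial ℚ)
        (fun u => Finsupp.linearCombination (Polynomial ℚ) (hstar u) y) x := by
  rw [Finsupp.linearCombination_apply]
  unfold hstarB
  refine Finsupp.sum_congr fun u _ => ?_
  rw [Finsupp.linearCombination_apply, Finsupp.smul_sum]
  exact Finsupp.sum_congr fun v _ => by rw [mul_smul]

lemma hstarB_zero_left (y : M) : hstarB 0 y = 0 := by simp [hstarB_eq]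

lemma hstarB_add_left (x x' y : M) :
    hstarB (x + x') y = hstarB x y + hstarB x' y := by simp [hstarB_eq]

lemma hstarB_smul_left (c : Polynomial ℚ) (x y : M) :
    hstarB (c • x) y = c • hstarB x y := by simp [hstarB_eq]

lemma hstarB_eq' (x y : M) :
    hstarB x y =
      x.sum fun u c => c • Finsupp.linearCombination (Polynomial ℚ) (hstar u) y := by
  rw [hstarB_eq, Finsupp.linearCombination_apply]

lemma hstarB_zero_right (x : M) : hstarB x 0 = 0 := by
  simp [hstarB_eq']

lemma hstarB_add_right (x y y' : M) :
    hstarB x (y + y') = hstarB x y + hstarB x y' := by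
  simp only [hstarB_eq', map_add, smul_add, Finsupp.sum_add]

lemma hstarB_smul_right (c : Polynomial ℚ) (x y : M) :
    hstarB x (c • y) = c • hstarB x y := by
  simp only [hstarB_eq', map_smul, Finsupp.smul_sum]
  exact Finsupp.sum_congr fun u _ => smul_comm _ _ _

lemma hstar_nil_left (v : List ℕ) : hstar [] v = Finsupp.single v 1 := by rw [hstar]

lemma hstar_nil_right (v : List ℕ) : hstar v [] = Finsupp.single v 1 := by
  cases v <;> rw [hstar] <;> simp

lemma hstar_cons (a b : ℕ) (u v : List ℕ) :
    hstar (a :: u) (b :: v) =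
      pre a (hstar u (b :: v)) + pre b (hstar (a :: u) v) + pre (a + b) (hstar u v) := by
  rw [hstar]

lemma hstar_comm : ∀ u v : List ℕ, hstar u v = hstar v u
  | [], v => by rw [hstar_nil_left, hstar_nil_right]
  | a :: u, [] => by rw [hstar_nil_left, hstar_nil_right]
  | a :: u, b :: v => by
      rw [hstar_cons, hstar_cons, hstar_comm u (b :: v), hstar_comm (a :: u) v,
        hstar_comm u v, Nat.add_comm a b]
      abel
  termination_by u v => u.length + v.length
  decreasing_by all_goals simp <;> omega

lemma hstarB_comm (x y : M) : hstarB x y = hstarB y x := by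
  unfold hstarB
  rw [Finsupp.sum_comm]
  exact Finsupp.sum_congr fun v _ => Finsupp.sum_congr fun u _ => by
    rw [hstar_comm, mul_comm]

lemma H1c (a b : ℕ) (x y : M) :
    hstarB (pre a x) (pre b y) =
      pre a (hstarB x (pre b y)) + pre b (hstarB (pre a x) y)
        + pre (a + b) (hstarB x y) := by
  induction x using Finsupp.induction_linear with
  | zero => simp [pre_zero, hstarB_zero_left, hstarB_zero_right, pre_add]
  | add f g hf hg =>
      simp only [pre_add, hstarB_add_left, hstarB_add_right, hf, hg]
      abel
  | single u c =>
      induction y using Finsupp.induction_linear with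
      | zero => simp [pre_zero, hstarB_zero_left, hstarB_zero_right, pre_add]
      | add f g hf hg =>
          simp only [pre_add, hstarB_add_left, hstarB_add_right, hf, hg]
          abel
      | single v d =>
          simp only [pre_single, hstarB_single_single, hstar_cons, pre_smul, smul_add]

set_option maxHeartbeats 1000000 in
lemma H2c (a b : ℕ) (x y : M) :
    hstarB (diaComb a x) (pre b y) =
      diaComb a (hstarB x (pre b y)) + pre b (hstarB (diaComb a x) y)
        - pre (a + b) (hstarB x y) := by
  induction x using Finsupp.induction_linear with
  | zero => simp [pre_zero, diaComb_zero, hstarB_zero_left, hstarB_zero_right]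
  | add f g hf hg =>
      simp only [diaComb_add, pre_add, hstarB_add_left, hstarB_add_right, hf, hg]
      abel
  | single u c =>
      induction y using Finsupp.induction_linear with
      | zero => simp [pre_zero, diaComb_zero, hstarB_zero_left, hstarB_zero_right]
      | add f g hf hg =>
          simp only [pre_add, hstarB_add_left, hstarB_add_right, diaComb_add, hf, hg]
          abel
      | single v d =>
          rw [diaComb_single, pre_single]
          cases u with
          | nil =>
              simp only [diaWord, smul_zero, hstarB_zero_left, hstarB_single_single,
                hstar_nil_left, diaComb_smul, diaComb_single, pre_zero,
                pre_smul, pre_single]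
              simp
          | cons e u' =>
              simp only [diaWord, Finsupp.smul_single, smul_eq_mul, mul_one]
              rw [hstarB_single_single, hstarB_single_single, hstarB_single_single,
                hstar_cons (a+e) b u' v, hstar_cons e b u' v]
              simp only [smul_add, diaComb_smul, diaComb_add, dia_pre, pre_smul]
              rw [hstarB_single_single, pre_smul]
              abel

lemma hstarB_nil_left (c : Polynomial ℚ) (y : M) :
    hstarB (Finsupp.single ([] : List ℕ) c) y = c • y := by
  induction y using Finsupp.induction_linear with
  | zero => simp [hstarB_zero_right]
  | add f g hf hg => simp [hstarB_add_right, hf, hg]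
  | single v d => rw [hstarB_single_single, hstar_nil_left]; simp [mul_smul]

lemma hstarB_nil_right (c : Polynomial ℚ) (y : M) :
    hstarB y (Finsupp.single ([] : List ℕ) c) = c • y := by
  rw [hstarB_comm, hstarB_nil_left]

lemma dia_diaWord (a b : ℕ) (v : List ℕ) :
    diaComb a (diaWord b v) = diaWord (a + b) v := by
  cases v with
  | nil => simp [diaWord, diaComb_zero]
  | cons f v' => simp [diaWord, diaComb_single, Nat.add_assoc]

lemma H2c' (a b : ℕ) (x y : M) :
    hstarB (pre a x) (diaComb b y) =
      pre a (hstarB x (diaComb b y)) + diaComb b (hstarB (pre a x) y)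
        - pre (a + b) (hstarB x y) := by
  rw [hstarB_comm, H2c b a y x, hstarB_comm y (pre a x), hstarB_comm y x,
    hstarB_comm x (diaComb b y), Nat.add_comm b a]
  abel

set_option maxHeartbeats 1000000 in
lemma H3c (a b : ℕ) (x y : M) :
    hstarB (diaComb a x) (diaComb b y) =
      diaComb a (hstarB x (diaComb b y)) + diaComb b (hstarB (diaComb a x) y)
        - diaComb (a + b) (hstarB x y) := by
  induction x using Finsupp.induction_linear with
  | zero => simp [diaComb_zero, hstarB_zero_left, hstarB_zero_right]
  | add f g hf hg =>
      simp only [diaComb_add, hstarB_add_left, hstarB_add_right, hf, hg]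
      abel
  | single u c =>
      induction y using Finsupp.induction_linear with
      | zero => simp [diaComb_zero, hstarB_zero_left, hstarB_zero_right]
      | add f g hf hg =>
          simp only [diaComb_add, hstarB_add_left, hstarB_add_right, hf, hg]
          abel
      | single v d =>
          rw [diaComb_single, diaComb_single]
          cases u with
          | nil =>
              simp only [show diaWord a [] = 0 from rfl, smul_zero, hstarB_zero_left,
                hstarB_nil_left, diaComb_smul, diaComb_zero, diaComb_single,
                hstarB_smul_right, zero_add]
              rw [dia_diaWord, smul_comm d c]
              simp
          | cons e u' =>
            cases v with
            | nil =>
                simp only [show diaWord b [] = 0 from rfl, smul_zero, hstarB_zero_right,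
                  hstarB_nil_right, diaComb_smul, diaComb_zero, diaComb_single,
                  hstarB_smul_left, add_zero, diaWord]
                rw [show b+(a+e) = a+b+e by omega]
                simp
            | cons f v' =>
                simp only [diaWord, Finsupp.smul_single, smul_eq_mul, mul_one]
                rw [hstarB_single_single, hstarB_single_single, hstarB_single_single,
                  hstarB_single_single,
                  hstar_cons (a+e) (b+f) u' v', hstar_cons e (b+f) u' v',
                  hstar_cons (a+e) f u' v', hstar_cons e f u' v']
                simp only [smul_add, diaComb_smul, diaComb_add, dia_pre, pre_smul]
                rw [show a+(e+(b+f)) = a+e+(b+f) by omega, show b+(a+e) = a+b+e by omega,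
                  show b+(a+e+f) = a+b+(e+f) by omega, show a+(b+f) = a+b+f by omega]
                abel

lemma tstar_nil_left (v : List ℕ) : tstar [] v = Finsupp.single v 1 := by rw [tstar]

lemma tstar_nil_right (v : List ℕ) : tstar v [] = Finsupp.single v 1 := by
  cases v <;> rw [tstar] <;> simp

lemma tstar_cons (a b : ℕ) (u v : List ℕ) :
    tstar (a :: u) (b :: v) =
      pre a (tstar u (b :: v)) + pre b (tstar (a :: u) v)
        + ((1 - 2 * X : Polynomial ℚ) • pre (a + b) (tstar u v))
        + ((X ^ 2 - X : Polynomial ℚ) • diaComb (a + b) (tstar u v)) := by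
  rw [tstar]

lemma StL_eq (x : M) :
    StL x = Finsupp.linearCombination (Polynomial ℚ) St x := by
  rw [Finsupp.linearCombination_apply]; rfl

lemma StL_single (w : List ℕ) (c : Polynomial ℚ) :
    StL (Finsupp.single w c) = c • St w := by simp [StL_eq]

lemma StL_zero : StL 0 = 0 := by simp [StL_eq]

lemma StL_add (x y : M) : StL (x + y) = StL x + StL y := by simp [StL_eq]

lemma StL_smul (c : Polynomial ℚ) (x : M) : StL (c • x) = c • StL x := by
  simp [StL_eq]

lemma St_cons (a : ℕ) (u : List ℕ) :
    St (a :: u) = pre a (St u) + (X : Polynomial ℚ) • diaComb a (St u) := by rw [St]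

lemma StL_pre (a : ℕ) (x : M) :
    StL (pre a x) = pre a (StL x) + (X : Polynomial ℚ) • diaComb a (StL x) := by
  induction x using Finsupp.induction_linear with
  | zero => simp [pre_zero, StL_zero, diaComb_zero]
  | add f g hf hg =>
      simp only [pre_add, StL_add, diaComb_add, smul_add, hf, hg]
      abel
  | single w c =>
      rw [pre_single, StL_single, StL_single, St_cons, smul_add, pre_smul,
        diaComb_smul, smul_comm c (X : Polynomial ℚ)]

lemma StL_dia (a : ℕ) (x : M) : StL (diaComb a x) = diaComb a (StL x) := by
  induction x using Finsupp.induction_linear with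
  | zero => simp [StL_zero, diaComb_zero]
  | add f g hf hg => simp only [diaComb_add, StL_add, hf, hg]
  | single w c =>
      rw [diaComb_single, StL_single, diaComb_smul]
      cases w with
      | nil =>
          simp only [show diaWord a [] = 0 from rfl, smul_zero, StL_zero, St]
          rw [show (Finsupp.single ([] : List ℕ) 1 : M) = Finsupp.single [] 1 from rfl]
          simp [diaComb_single, show diaWord a [] = 0 from rfl]
      | cons e w' =>
          rw [show diaWord a (e :: w') = Finsupp.single ((a + e) :: w') 1 from rfl,
            StL_smul, StL_single, St_cons, St_cons, diaComb_add, dia_pre,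
            diaComb_smul, dia_dia]
          simp

lemma tstarB_single_single (u v : List ℕ) (c d : Polynomial ℚ) :
    tstarB (Finsupp.single u c) (Finsupp.single v d) = (c * d) • tstar u v := by
  unfold tstarB
  rw [Finsupp.sum_single_index (by simp), Finsupp.sum_single_index (by simp)]

lemma hstarB_St_nil_left (y : M) : hstarB (St []) y = y := by
  show hstarB (Finsupp.single [] 1) y = y
  rw [hstarB_nil_left, one_smul]

lemma hstarB_St_nil_right (y : M) : hstarB y (St []) = y := by
  rw [hstarB_comm, hstarB_St_nil_left]

set_option maxHeartbeats 2000000 in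
theorem key : ∀ u v : List ℕ, StL (tstar u v) = hstarB (St u) (St v)
  | [], v => by rw [tstar_nil_left, StL_single, one_smul, hstarB_St_nil_left]
  | a :: u, [] => by rw [tstar_nil_right, StL_single, one_smul, hstarB_St_nil_right]
  | a :: u, b :: v => by
      have IH1 := key u (b :: v)
      have IH2 := key (a :: u) v
      have IH3 := key u v
      rw [tstar_cons, StL_add, StL_add, StL_add, StL_smul, StL_smul, StL_pre,
        StL_pre, StL_pre, StL_dia, IH1, IH2, IH3, St_cons a u, St_cons b v]
      simp only [hstarB_add_left, hstarB_add_right, hstarB_smul_left,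
        hstarB_smul_right]
      rw [H1c, H2c, H2c', H3c]
      simp only [hstarB_add_left, hstarB_add_right, hstarB_smul_left,
        hstarB_smul_right, pre_add, pre_smul, diaComb_add, diaComb_smul,
        smul_add, smul_sub]
      module
  termination_by u v => u.length + v.length
  decreasing_by all_goals simp <;> omega

/-- `S^t` intertwines the interpolated product with the harmonic product:
`S^t(x ∗_t y) = S^t(x) ∗ S^t(y)` for all `x, y ∈ 𝔥`. -/
theorem St_tstar_eq_hstar (x y : List ℕ →₀ Polynomial ℚ) :
    StL (tstarB x y) = hstarB (StL x) (StL y) := by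
  induction x using Finsupp.induction_linear with
  | zero =>
      have : tstarB 0 y = 0 := by simp [tstarB]
      simp [this, StL_zero, hstarB_zero_left]
  | add f g hf hg =>
      have : tstarB (f + g) y = tstarB f y + tstarB g y := by
        unfold tstarB
        rw [Finsupp.sum_add_index (by simp) (by intros; simp [add_mul, add_smul,
          Finsupp.sum_add])]
      rw [this, StL_add, StL_add, hstarB_add_left, hf, hg]
  | single u c =>
      induction y using Finsupp.induction_linear with
      | zero =>
          have : tstarB (Finsupp.single u c) 0 = 0 := by simp [tstarB]
          simp [this, StL_zero, hstarB_zero_right]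
      | add f g hf hg =>
          have : tstarB (Finsupp.single u c) (f + g) =
              tstarB (Finsupp.single u c) f + tstarB (Finsupp.single u c) g := by
            unfold tstarB
            rw [Finsupp.sum_single_index (by simp), Finsupp.sum_single_index (by simp),
              Finsupp.sum_single_index (by simp),
              Finsupp.sum_add_index (by simp) (by intros; simp [mul_add, add_smul])]
          rw [this, StL_add, StL_add, hstarB_add_right, hf, hg]
      | single v d =>
          rw [tstarB_single_single, StL_smul, key, StL_single, StL_single,
            hstarB_smul_left, hstarB_smul_right, smul_smul]
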